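/- A bounded linear operator T : X → Y between Banach spaces satisfies T = T T' T for some bounded T' : Y → X (inner regularity) if and only if the kernel of T is a closed complemented subspace of X and the range of T is a closed complemented subspace of Y. -/

import Mathlib

/-- A bounded linear operator `T : X → Y` between Banach spaces is inner regular
(`T = T T' T` for some bounded `T'`) iff its kernel is closed complemented in `X` and
its range is closed and complemented in `Y`. -/
theorem innerRegular_iff_ker_range_closedComplemented {X Y : Type*}
    [NormedAddCommGroup X] [NormedSpace ℝ X] [CompleteSpace X]
    [NormedAddCommGroup Y] [NormedSpace ℝ Y] [CompleteSpace Y]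
    (T : X →L[ℝ] Y) :
    (∃ T' : Y →L[ℝ] X, T.comp (T'.comp T) = T) ↔
      ((LinearMap.ker (T : X →ₗ[ℝ] Y)).ClosedComplemented ∧
        IsClosed (LinearMap.range (T : X →ₗ[ℝ] Y) : Set Y) ∧
        (LinearMap.range (T : X →ₗ[ℝ] Y)).ClosedComplemented) := by
  constructor
  · rintro ⟨T', h⟩
    have hT : ∀ x, T (T' (T x)) = T x := fun x =>
      congrArg (fun f : X →L[ℝ] Y => f x) h
    refine ⟨?_, ?_, ?_⟩
    · refine ⟨ContinuousLinearMap.codRestrict (ContinuousLinearMap.id ℝ X - T'.comp T)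
        (LinearMap.ker (T : X →ₗ[ℝ] Y)) (fun x => ?_), fun x => ?_⟩
      · simp [LinearMap.mem_ker, hT x]
      · ext
        have hx : T (x : X) = 0 := LinearMap.mem_ker.mp x.2
        simp [ContinuousLinearMap.coe_codRestrict_apply, hx]
    · have hset : (LinearMap.range (T : X →ₗ[ℝ] Y) : Set Y) =
          (LinearMap.ker ((ContinuousLinearMap.id ℝ Y - T.comp T' : Y →L[ℝ] Y) : Y →ₗ[ℝ] Y) : Set Y) := by
        ext y
        constructor
        · rintro ⟨x, rfl⟩
          simp [LinearMap.mem_ker, hT x]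
        · intro hy
          have hy' : y - T (T' y) = 0 := hy
          exact ⟨T' y, (sub_eq_zero.mp hy').symm⟩
      rw [hset]
      exact ContinuousLinearMap.isClosed_ker (ContinuousLinearMap.id ℝ Y - T.comp T')
    · refine ⟨ContinuousLinearMap.codRestrict (T.comp T') (LinearMap.range (T : X →ₗ[ℝ] Y))
        (fun y => ⟨T' y, rfl⟩), fun y => ?_⟩
      obtain ⟨x, hx⟩ := y.2
      ext
      simp [ContinuousLinearMap.coe_codRestrict_apply, ← hx, hT x]
      exact hT x
  · rintro ⟨⟨pK, hpK⟩, hcl, ⟨pR, hpR⟩⟩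
    set P : X →L[ℝ] X := (LinearMap.ker (T : X →ₗ[ℝ] Y)).subtypeL.comp pK with hPdef
    have hPmem : ∀ x, P x ∈ LinearMap.ker (T : X →ₗ[ℝ] Y) := fun x => (pK x).2
    have hPfix : ∀ x ∈ LinearMap.ker (T : X →ₗ[ℝ] Y), P x = x := fun x hx => by
      have := hpK ⟨x, hx⟩
      simpa [hPdef] using congrArg Subtype.val this
    have hTQ : ∀ x, T (x - P x) = T x := fun x => by
      have h0 : T (P x) = 0 := LinearMap.mem_ker.mp (hPmem x)
      rw [map_sub, h0, sub_zero]
    set W := LinearMap.ker (P : X →ₗ[ℝ] X) with hWdef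
    have hWc : IsClosed (W : Set X) := ContinuousLinearMap.isClosed_ker P
    haveI : CompleteSpace W := hWc.completeSpace_coe
    haveI : CompleteSpace (LinearMap.range (T : X →ₗ[ℝ] Y)) := hcl.completeSpace_coe
    set Tw : W →L[ℝ] LinearMap.range (T : X →ₗ[ℝ] Y) :=
      (T.comp W.subtypeL).codRestrict (LinearMap.range (T : X →ₗ[ℝ] Y))
        (fun w => ⟨w.1, rfl⟩) with hTwdef
    have hker : LinearMap.ker (Tw : W →ₗ[ℝ] LinearMap.range (T : X →ₗ[ℝ] Y)) = ⊥ := by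
      ext w
      simp only [LinearMap.mem_ker, Submodule.mem_bot]
      constructor
      · intro hw
        have h1 : T (w : X) = 0 := congrArg Subtype.val hw
        have h2 : P (w : X) = (w : X) := hPfix _ (LinearMap.mem_ker.mpr h1)
        have h3 : P (w : X) = 0 := w.2
        ext
        rw [← h2, h3]; simp
      · rintro rfl; simp
    have hrange : LinearMap.range (Tw : W →ₗ[ℝ] LinearMap.range (T : X →ₗ[ℝ] Y)) = ⊤ := by
      rw [LinearMap.range_eq_top]
      rintro ⟨y, x, rfl⟩
      have hmem : x - P x ∈ W := by
        have hPP : P (P x) = P x := hPfix _ (hPmem x)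
        show P (x - P x) = 0
        rw [map_sub, hPP, sub_self]
      exact ⟨⟨x - P x, hmem⟩, Subtype.ext (hTQ x)⟩
    set e := ContinuousLinearEquiv.ofBijective Tw hker hrange with hedef
    refine ⟨W.subtypeL.comp ((e.symm : LinearMap.range (T : X →ₗ[ℝ] Y) →L[ℝ] W).comp pR), ?_⟩
    ext x
    have h1 : pR (T x) = ⟨T x, LinearMap.mem_range_self (T : X →ₗ[ℝ] Y) x⟩ :=
      hpR ⟨T x, LinearMap.mem_range_self (T : X →ₗ[ℝ] Y) x⟩
    have h2 : e (e.symm (pR (T x))) = pR (T x) := e.apply_symm_apply _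
    have h4 : ∀ z : W, ((e z : LinearMap.range (T : X →ₗ[ℝ] Y)) : Y) = T (z : X) := fun z => rfl
    have h3 : T ((e.symm (pR (T x))) : X) = T x := by
      rw [← h4, h2, h1]
    simpa using h3
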